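/- Heap strengthening for bPCFRL evaluation: if ⊢ (R, H₁) : Γ, Γ ⊢ M : τ ⊣ Γ', H = H₁ ⊎ H₂, and (M, R, H) ⇓ (v, R', H'), then there exists H₁' such that (M, R, H₁) ⇓ (v, R', H₁') and H' = H₁' ⊎ H₂: the evaluation depends only on and modifies only the portion of the heap owned by the typing environment. -/

import Mathlib

/-- Base-or-reference types `ρ ::= b | ref ρ` of bPCFRL. -/
inductive RTy : Type where
  | base
  | ref (ρ : RTy)
  deriving DecidableEq

/-- Normal types `ν ::= unit | ρ | ν₁ →ⁿ ν₂` (the label `n` is the number of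
reference cells contained in the closure). -/
inductive NTy : Type where
  | unit
  | ofR (ρ : RTy)
  | fn (a : NTy) (n : ℕ) (b : NTy)
  deriving DecidableEq

/-- Full types: normal types and recursive-function types `ν₁ →^Δ ν₂`, where `Δ`
is a normal type environment describing the reference cells accessed by the
recursive function. -/
inductive FTy : Type where
  | ofN (ν : NTy)
  | rfn (a : NTy) (Δ : List (ℕ × NTy)) (b : NTy)
  deriving DecidableEq

/-- Sharable types: base types, `unit`, functions owning no reference cells, and
recursive-function types. -/
def sharableN : NTy → Bool
  | .unit => true
  | .ofR .base => true
  | .ofR (.ref _) => false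
  | .fn _ n _ => n == 0

def sharableF : FTy → Bool
  | .ofN ν => sharableN ν
  | .rfn _ _ _ => true

def sizeR : RTy → ℕ
  | .base => 1
  | .ref ρ => sizeR ρ

/-- The store size `|ν|` of a normal type. -/
def sizeN : NTy → ℕ
  | .unit => 0
  | .ofR .base => 0
  | .ofR (.ref ρ) => sizeR ρ
  | .fn _ n _ => n

def sizeF : FTy → ℕ
  | .ofN ν => sizeN ν
  | .rfn _ _ _ => 0

/-- Type environments are sequences of bindings of (distinct) variables. -/
abbrev TEnv := List (ℕ × FTy)

def envSize (Γ : TEnv) : ℕ := (Γ.map fun p => sizeF p.2).sum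

def lookupTE (Γ : TEnv) (x : ℕ) : Option FTy :=
  ((Γ.reverse).find? fun p => p.1 == x).map (·.2)

def removeTE (Γ : TEnv) (x : ℕ) : TEnv := Γ.filter fun p => p.1 != x

/-- `Γ∖x`: remove the binding of `x` if its type is not sharable. -/
def dropNS (Γ : TEnv) (x : ℕ) : TEnv :=
  Γ.filter fun p => p.1 != x || sharableF p.2

/-- Remove the binding of `x` if the given type `τ` is not sharable. -/
def dropIfNS (Γ : TEnv) (x : ℕ) (τ : FTy) : TEnv :=
  if sharableF τ then Γ else removeTE Γ x

/-- `splitTE Γ S` splits `Γ` into the part on the variables in `S` and the rest;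
bindings of sharable type in `S` are kept in both parts. -/
def splitTE : TEnv → Finset ℕ → TEnv × TEnv
  | [], _ => ([], [])
  | (x, τ) :: Γ, S =>
    let p := splitTE Γ S
    if x ∈ S then
      if sharableF τ then ((x, τ) :: p.1, (x, τ) :: p.2)
      else ((x, τ) :: p.1, p.2)
    else (p.1, (x, τ) :: p.2)

def nenvToT (Δ : List (ℕ × NTy)) : TEnv := Δ.map fun p => (p.1, FTy.ofN p.2)

def domTE (Γ : TEnv) : Finset ℕ := (Γ.map Prod.fst).toFinset

/-- Expressions of bPCFRL (in A-normal form, with named variables; following the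
paper, variable occurrences and binders are annotated with their types). `B` is
the type of constants of the base type `b`. -/
inductive Expr (B : Type) : Type where
  | fail
  | unitE
  | const (c : B)
  | var (x : ℕ) (τ : FTy)
  | op (f : List B → B) (xs : List ℕ)
  | deref (x : ℕ) (ρ : RTy)
  | mkref (x : ℕ) (ρ : RTy)
  | assign (y x : ℕ) (ρ : RTy)
  | lete (x : ℕ) (τ : FTy) (e₁ e₂ : Expr B)
  | ite (x : ℕ) (e₁ e₂ : Expr B)
  | lam (x : ℕ) (ν : NTy) (e : Expr B)
  | fix (f x : ℕ) (ν₁ : NTy) (Δ : List (ℕ × NTy)) (ν₂ : NTy) (e : Expr B)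
  | app (f x : ℕ)

/-- Free variables. -/
def fv {B : Type} : Expr B → Finset ℕ
  | .fail => ∅
  | .unitE => ∅
  | .const _ => ∅
  | .var x _ => {x}
  | .op _ xs => xs.toFinset
  | .deref x _ => {x}
  | .mkref x _ => {x}
  | .assign y x _ => {y, x}
  | .lete x _ e₁ e₂ => fv e₁ ∪ (fv e₂ \ {x})
  | .ite x e₁ e₂ => insert x (fv e₁ ∪ fv e₂)
  | .lam x _ e => fv e \ {x}
  | .fix f x _ _ _ e => fv e \ {f, x}
  | .app f x => {f, x}

def isBaseF (τ : FTy) : Prop := τ = .ofN .unit ∨ τ = .ofN (.ofR .base)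

/-- The ownership type system of bPCFRL: `Typed Γ M τ Γ'` is the judgment
`Γ ⊢ M : τ ⊣ Γ'` with pre-type environment `Γ` and post-type environment `Γ'`. -/
inductive Typed {B : Type} : TEnv → Expr B → FTy → TEnv → Prop where
  | fail {Γ τ} : isBaseF τ → Typed Γ .fail τ Γ
  | unit {Γ} : Typed Γ .unitE (.ofN .unit) Γ
  | const {Γ c} : Typed Γ (.const c) (.ofN (.ofR .base)) Γ
  | var {Γ x τ} : lookupTE Γ x = some τ → Typed Γ (.var x τ) τ (dropNS Γ x)
  | op {Γ f xs} : (∀ y ∈ xs, lookupTE Γ y = some (.ofN (.ofR .base))) →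
      Typed Γ (.op f xs) (.ofN (.ofR .base)) Γ
  | deref {Γ x ρ} : lookupTE Γ x = some (.ofN (.ofR (.ref ρ))) →
      Typed Γ (.deref x ρ) (.ofN (.ofR ρ)) (dropIfNS Γ x (.ofN (.ofR ρ)))
  | mkref {Γ x ρ} : lookupTE Γ x = some (.ofN (.ofR ρ)) →
      Typed Γ (.mkref x ρ) (.ofN (.ofR (.ref ρ))) (dropNS Γ x)
  | assign {Γ y x ρ} : lookupTE Γ y = some (.ofN (.ofR (.ref ρ))) →
      lookupTE Γ x = some (.ofN (.ofR ρ)) →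
      Typed Γ (.assign y x ρ) (.ofN .unit) (dropNS Γ x)
  | lete {Γ Γ' Γ'' x τ τ' e₁ e₂} : Typed Γ e₁ τ' Γ'' →
      Typed (Γ'' ++ [(x, τ')]) e₂ τ Γ' →
      Typed Γ (.lete x τ' e₁ e₂) τ (removeTE Γ' x)
  | ite {Γ Γ' x τ e₁ e₂} : lookupTE Γ x = some (.ofN (.ofR .base)) →
      Typed Γ e₁ τ Γ' → Typed Γ e₂ τ Γ' → Typed Γ (.ite x e₁ e₂) τ Γ'
  | lam {Γ Γ' Δ x ν₁ ν₂ e} : splitTE Γ (fv (Expr.lam x ν₁ e)) = (Δ, Γ') →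
      Typed (Δ ++ [(x, .ofN ν₁)]) e (.ofN ν₂) (Δ ++ [(x, .ofN ν₁)]) →
      Typed Γ (.lam x ν₁ e) (.ofN (.fn ν₁ (envSize Δ) ν₂)) Γ'
  | rfun {Γ Γ' Δ f x ν₁ ν₂ e} :
      splitTE Γ (fv (Expr.fix f x ν₁ Δ ν₂ e)) = (nenvToT Δ, Γ') →
      Typed (nenvToT Δ ++ [(f, .rfn ν₁ Δ ν₂), (x, .ofN ν₁)]) e (.ofN ν₂)
            (nenvToT Δ ++ [(f, .rfn ν₁ Δ ν₂), (x, .ofN ν₁)]) →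
      Typed Γ (.fix f x ν₁ Δ ν₂ e) (.ofN (.fn ν₁ (envSize (nenvToT Δ)) ν₂)) Γ'
  | app {Γ f x ν₁ m ν₂} : lookupTE Γ f = some (.ofN (.fn ν₁ m ν₂)) →
      lookupTE Γ x = some (.ofN ν₁) →
      Typed Γ (.app f x) (.ofN ν₂) Γ
  | rapp {Γ f x ν₁ Δ ν₂} : lookupTE Γ f = some (.rfn ν₁ Δ ν₂) →
      lookupTE Γ x = some (.ofN ν₁) →
      (nenvToT Δ).Sublist (removeTE (removeTE Γ f) x) →
      Typed Γ (.app f x) (.ofN ν₂) Γ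

/-- Run-time values of bPCFRL. Closure environments record, as in the paper,
the (annotated) type of each variable together with its value. -/
inductive Val (B : Type) : Type where
  | unitV
  | constV (c : B)
  | loc (ℓ : ℕ)
  | clos (x : ℕ) (ν : NTy) (e : Expr B) (R : ℕ → Option (FTy × Val B))
  | closR (f x : ℕ) (ν₁ : NTy) (Δ : List (ℕ × NTy)) (ν₂ : NTy) (e : Expr B)
      (R : ℕ → Option (FTy × Val B))

/-- Run-time environments (maps from variables to typed values). -/
abbrev REnv (B : Type) := ℕ → Option (FTy × Val B)

/-- Heaps (maps from locations to values). -/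
abbrev Heap (B : Type) := ℕ → Option (Val B)

def emptyR {B : Type} : REnv B := fun _ => none
def emptyH {B : Type} : Heap B := fun _ => none

def updR {B : Type} (R : REnv B) (x : ℕ) (τ : FTy) (v : Val B) : REnv B :=
  fun y => if y = x then some (τ, v) else R y

def remR {B : Type} (R : REnv B) (x : ℕ) : REnv B :=
  fun y => if y = x then none else R y

/-- Remove `x` from `R` if the type `τ` is not sharable. -/
def dropRV {B : Type} (R : REnv B) (x : ℕ) (τ : FTy) : REnv B :=
  if sharableF τ then R else remR R x

def updH {B : Type} (H : Heap B) (ℓ : ℕ) (v : Val B) : Heap B :=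
  fun ℓ' => if ℓ' = ℓ then some v else H ℓ'

/-- Disjointness of heaps. -/
def HDisj {B : Type} (H₁ H₂ : Heap B) : Prop := ∀ ℓ, H₁ ℓ = none ∨ H₂ ℓ = none

/-- (Disjoint) union of heaps. -/
def HUn {B : Type} (H₁ H₂ : Heap B) : Heap B :=
  fun ℓ => (H₁ ℓ).orElse fun _ => H₂ ℓ

/-- `splitREnv R S` splits a run-time environment analogously to `splitTE`. -/
def splitREnv {B : Type} (R : REnv B) (S : Finset ℕ) : REnv B × REnv B :=
  (fun x => if x ∈ S then R x else none,
   fun x =>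
     match R x with
     | some (τ, v) => if x ∈ S ∧ sharableF τ = false then none else some (τ, v)
     | none => none)

def constOf {B : Type} : Val B → Option B
  | .constV c => some c
  | _ => none

def lookupConsts {B : Type} (R : REnv B) (xs : List ℕ) : Option (List B) :=
  xs.mapM fun x => (R x).bind fun p => constOf p.2

/-- Evaluation answers: `fail`, or a value together with the updated environment
and heap. -/
inductive Ans (B : Type) : Type where
  | fail
  | res (v : Val B) (R : REnv B) (H : Heap B)

def Ans.removeVar {B : Type} : Ans B → ℕ → Ans B
  | .fail, _ => .fail
  | .res v R H, x => .res v (remR R x) H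

def Ans.withEnv {B : Type} : Ans B → REnv B → Ans B
  | .fail, _ => .fail
  | .res v _ H, R => .res v R H

/-- Big-step evaluation of bPCFRL: `Eval tru M R H a` evaluates `M` under the
environment `R` and heap `H` (`tru` is the truth-value of base constants, used
in conditionals). Failure propagates through evaluation. -/
inductive Eval {B : Type} (tru : B → Bool) : Expr B → REnv B → Heap B → Ans B → Prop where
  | fail {R H} : Eval tru .fail R H .fail
  | unit {R H} : Eval tru .unitE R H (.res .unitV R H)
  | const {R H c} : Eval tru (.const c) R H (.res (.constV c) R H)
  | var {R H x τ v} : R x = some (τ, v) →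
      Eval tru (.var x τ) R H (.res v (dropRV R x τ) H)
  | op {R H f xs bs} : lookupConsts R xs = some bs →
      Eval tru (.op f xs) R H (.res (.constV (f bs)) R H)
  | deref {R H x τ ρ ℓ v} : R x = some (τ, .loc ℓ) → H ℓ = some v →
      Eval tru (.deref x ρ) R H (.res v (dropRV R x (.ofN (.ofR ρ))) H)
  | mkref {R H x τ ρ v ℓ} : R x = some (τ, v) → H ℓ = none →
      Eval tru (.mkref x ρ) R H (.res (.loc ℓ) (dropRV R x (.ofN (.ofR ρ))) (updH H ℓ v))
  | assign {R H y x τy τx ρ ℓ v} : R y = some (τy, .loc ℓ) → R x = some (τx, v) →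
      Eval tru (.assign y x ρ) R H (.res .unitV (dropRV R x (.ofN (.ofR ρ))) (updH H ℓ v))
  | leteF {R H x τ e₁ e₂} : Eval tru e₁ R H .fail → Eval tru (.lete x τ e₁ e₂) R H .fail
  | lete {R H x τ e₁ e₂ v₁ R₁ H₁ a} : Eval tru e₁ R H (.res v₁ R₁ H₁) →
      Eval tru e₂ (updR R₁ x τ v₁) H₁ a →
      Eval tru (.lete x τ e₁ e₂) R H (a.removeVar x)
  | iteT {R H x τ b e₁ e₂ a} : R x = some (τ, .constV b) → tru b = true →
      Eval tru e₁ R H a → Eval tru (.ite x e₁ e₂) R H a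
  | iteF {R H x τ b e₁ e₂ a} : R x = some (τ, .constV b) → tru b = false →
      Eval tru e₂ R H a → Eval tru (.ite x e₁ e₂) R H a
  | lam {R H x ν e} : Eval tru (.lam x ν e) R H
      (.res (.clos x ν e (splitREnv R (fv (Expr.lam x ν e))).1)
            (splitREnv R (fv (Expr.lam x ν e))).2 H)
  | fixE {R H f x ν₁ Δ ν₂ e} : Eval tru (.fix f x ν₁ Δ ν₂ e) R H
      (.res (.closR f x ν₁ Δ ν₂ e (splitREnv R (fv (Expr.fix f x ν₁ Δ ν₂ e))).1)
            (splitREnv R (fv (Expr.fix f x ν₁ Δ ν₂ e))).2 H)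
  | app1 {R H f x τf τx y ν e R₁ vx a} : R f = some (τf, .clos y ν e R₁) →
      R x = some (τx, vx) →
      Eval tru e (updR R₁ y (.ofN ν) vx) H a →
      Eval tru (.app f x) R H (a.withEnv R)
  | app2 {R H f x τf τx g y ν₁ Δ ν₂ e R₁ vx a} :
      R f = some (τf, .closR g y ν₁ Δ ν₂ e R₁) →
      R x = some (τx, vx) →
      Eval tru e
        (updR (updR R₁ g (.rfn ν₁ Δ ν₂) (.closR g y ν₁ Δ ν₂ e R₁)) y (.ofN ν₁) vx) H a →
      Eval tru (.app f x) R H (a.withEnv R)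

mutual
/-- Run-time typing of values against a heap fragment (ownership of the heap is
split among the bindings). -/
inductive ValTyped {B : Type} : Val B → Heap B → FTy → Prop where
  | unit : ValTyped (B := B) .unitV emptyH (.ofN .unit)
  | const {c} : ValTyped (B := B) (.constV c) emptyH (.ofN (.ofR .base))
  | loc {v H ρ ℓ} : ValTyped v H (.ofN (.ofR ρ)) → H ℓ = none →
      ValTyped (B := B) (.loc ℓ) (updH H ℓ v) (.ofN (.ofR (.ref ρ)))
  | clos {R H Γ x ν₁ ν₂ e m} : EnvTyped R H Γ →
      Typed (Γ ++ [(x, .ofN ν₁)]) e (.ofN ν₂) (Γ ++ [(x, .ofN ν₁)]) →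
      envSize Γ = m →
      ValTyped (B := B) (.clos x ν₁ e R) H (.ofN (.fn ν₁ m ν₂))
  | closR {R H Δ f x ν₁ ν₂ e m} : EnvTyped R H (nenvToT Δ) →
      Typed (nenvToT Δ ++ [(f, .rfn ν₁ Δ ν₂), (x, .ofN ν₁)]) e (.ofN ν₂)
            (nenvToT Δ ++ [(f, .rfn ν₁ Δ ν₂), (x, .ofN ν₁)]) →
      envSize (nenvToT Δ) = m →
      ValTyped (B := B) (.closR f x ν₁ Δ ν₂ e R) H (.ofN (.fn ν₁ m ν₂))

/-- Run-time typing of environments and heaps: `⊢ (R, H) : Γ`. -/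
inductive EnvTyped {B : Type} : REnv B → Heap B → TEnv → Prop where
  | nil {R H} : EnvTyped (B := B) R H []
  | cons {R H₁ H₂ Γ x τ v} : EnvTyped R H₁ Γ → ValTyped v H₂ τ → HDisj H₁ H₂ →
      EnvTyped (updR R x τ v) (HUn H₁ H₂) (Γ ++ [(x, τ)])
  | consR {R R₁ H Δ f x ν₁ ν₂ e} : EnvTyped R H (nenvToT Δ) →
      Typed (nenvToT Δ ++ [(f, .rfn ν₁ Δ ν₂), (x, .ofN ν₁)]) e (.ofN ν₂)
            (nenvToT Δ ++ [(f, .rfn ν₁ Δ ν₂), (x, .ofN ν₁)]) →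
      (∀ y : ℕ, (lookupTE (nenvToT Δ) y).isSome → R₁ y = R y) →
      EnvTyped (updR R f (.rfn ν₁ Δ ν₂) (.closR f x ν₁ Δ ν₂ e R₁)) H
               (nenvToT Δ ++ [(f, .rfn ν₁ Δ ν₂)])
end

section AuxHeapStrengthening

variable {B : Type}

/-- Locations syntactically reachable from a value (through the relevant part
of closure environments). -/
inductive HasLoc {B : Type} : Val B → ℕ → Prop where
  | loc {ℓ} : HasLoc (.loc ℓ) ℓ
  | clos {x ν e R y τ v ℓ} : y ∈ fv (Expr.lam x ν e) → R y = some (τ, v) →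
      HasLoc v ℓ → HasLoc (.clos x ν e R) ℓ
  | closR {f x ν₁ Δ ν₂ e R y τ v ℓ} : y ∈ fv (Expr.fix f x ν₁ Δ ν₂ e) →
      R y = some (τ, v) → HasLoc v ℓ → HasLoc (.closR f x ν₁ Δ ν₂ e R) ℓ

lemma HUn_some {H₁ H₂ : Heap B} {ℓ v} (h : H₁ ℓ = some v) : HUn H₁ H₂ ℓ = some v := by
  simp [HUn, h, Option.orElse]

lemma HUn_none {H₁ H₂ : Heap B} {ℓ} (h : H₁ ℓ = none) : HUn H₁ H₂ ℓ = H₂ ℓ := by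
  simp [HUn, h, Option.orElse]

lemma HUn_eq_none {H₁ H₂ : Heap B} {ℓ} (h : HUn H₁ H₂ ℓ = none) :
    H₁ ℓ = none ∧ H₂ ℓ = none := by
  cases h1 : H₁ ℓ with
  | none => exact ⟨rfl, by rwa [HUn_none h1] at h⟩
  | some v => rw [HUn_some h1] at h; cases h

lemma updH_HUn (H₁ H₂ : Heap B) (ℓ : ℕ) (v : Val B) :
    updH (HUn H₁ H₂) ℓ v = HUn (updH H₁ ℓ v) H₂ := by
  funext ℓ'
  by_cases h : ℓ' = ℓ
  · simp [updH, HUn, h, Option.orElse]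
  · simp [updH, HUn, h]

lemma lookupTE_append_single (Γ : TEnv) (x : ℕ) (τ : FTy) (y : ℕ) :
    lookupTE (Γ ++ [(x, τ)]) y = if x = y then some τ else lookupTE Γ y := by
  simp only [lookupTE, List.reverse_append, List.reverse_cons, List.reverse_nil,
    List.nil_append, List.cons_append, List.nil_append, List.find?_cons]
  by_cases h : x = y
  · have hb : (x == y) = true := by simp [h]
    simp [hb, h]
  · have hb : (x == y) = false := by simp [h]
    simp [hb, h]

lemma lookupTE_mem' {Γ : TEnv} {y : ℕ} {τ : FTy} (h : lookupTE Γ y = some τ) :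
    (y, τ) ∈ Γ := by
  simp only [lookupTE, Option.map_eq_some_iff] at h
  obtain ⟨⟨a, σ⟩, hf, hσ⟩ := h
  have hm := List.mem_of_find?_eq_some hf
  have hp := List.find?_some hf
  simp only [beq_iff_eq] at hp
  cases hσ
  simpa [hp] using (List.mem_reverse).1 hm

lemma lookupTE_isSome_iff {Γ : TEnv} {y : ℕ} :
    (lookupTE Γ y).isSome ↔ ∃ σ, (y, σ) ∈ Γ := by
  constructor
  · intro h
    obtain ⟨τ, hτ⟩ := Option.isSome_iff_exists.1 h
    exact ⟨τ, lookupTE_mem' hτ⟩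
  · rintro ⟨σ, hm⟩
    have hf : ∃ p ∈ Γ.reverse, ((fun p : ℕ × FTy => p.1 == y) p : Bool) :=
      ⟨(y, σ), List.mem_reverse.2 hm, by simp⟩
    rw [← List.find?_isSome] at hf
    simpa [lookupTE, Option.isSome_map] using hf

lemma mem_splitTE1 {Γ : TEnv} {S : Finset ℕ} {p : ℕ × FTy}
    (h : p ∈ (splitTE Γ S).1) : p ∈ Γ := by
  induction Γ with
  | nil => simpa [splitTE] using h
  | cons q Γ ih =>
    obtain ⟨x, τ⟩ := q
    simp only [splitTE] at h
    split_ifs at h with h1 h2 <;> simp_all <;> tauto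

lemma mem_splitTE2 {Γ : TEnv} {S : Finset ℕ} {p : ℕ × FTy}
    (h : p ∈ (splitTE Γ S).2) : p ∈ Γ := by
  induction Γ with
  | nil => simpa [splitTE] using h
  | cons q Γ ih =>
    obtain ⟨x, τ⟩ := q
    simp only [splitTE] at h
    split_ifs at h with h1 h2 <;> simp_all <;> tauto

lemma typed_post_mem {Γ Γ' : TEnv} {M : Expr B} {τ : FTy}
    (h : Typed Γ M τ Γ') : ∀ y σ, (y, σ) ∈ Γ' → ∃ σ', (y, σ') ∈ Γ := by
  induction h with
  | fail _ => exact fun y σ h => ⟨σ, h⟩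
  | unit => exact fun y σ h => ⟨σ, h⟩
  | const => exact fun y σ h => ⟨σ, h⟩
  | var _ => exact fun y σ h => ⟨σ, (List.mem_filter.1 h).1⟩
  | op _ => exact fun y σ h => ⟨σ, h⟩
  | deref _ =>
    intro y σ h
    unfold dropIfNS at h
    split at h
    · exact ⟨σ, h⟩
    · exact ⟨σ, (List.mem_filter.1 h).1⟩
  | mkref _ => exact fun y σ h => ⟨σ, (List.mem_filter.1 h).1⟩
  | assign _ _ => exact fun y σ h => ⟨σ, (List.mem_filter.1 h).1⟩
  | @lete Γ₀ Γ₀' Γ₀'' x τ₀ τ' e₁ e₂ h1 h2 ih1 ih2 =>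
    intro y σ h
    have hm := List.mem_filter.1 h
    have hy : ¬ y = x := by simpa using hm.2
    obtain ⟨σ', hσ'⟩ := ih2 y σ hm.1
    rcases List.mem_append.1 hσ' with h' | h'
    · exact ih1 y σ' h'
    · simp at h'; exact absurd h'.1 hy
  | ite _ _ _ ih1 _ => exact ih1
  | @lam Γ₀ Γ₀' Δ x ν₁ ν₂ e hsplit _ _ =>
    intro y σ h
    have : (y, σ) ∈ (splitTE Γ₀ (fv (Expr.lam x ν₁ e))).2 := by rw [hsplit]; exact h
    exact ⟨σ, mem_splitTE2 this⟩
  | @rfun Γ₀ Γ₀' Δ f x ν₁ ν₂ e hsplit _ _ =>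
    intro y σ h
    have : (y, σ) ∈ (splitTE Γ₀ (fv (Expr.fix f x ν₁ Δ ν₂ e))).2 := by
      rw [hsplit]; exact h
    exact ⟨σ, mem_splitTE2 this⟩
  | app _ _ => exact fun y σ h => ⟨σ, h⟩
  | rapp _ _ _ => exact fun y σ h => ⟨σ, h⟩

lemma fv_lookup {Γ Γ' : TEnv} {M : Expr B} {τ : FTy}
    (h : Typed Γ M τ Γ') : ∀ y ∈ fv M, ∃ σ, (y, σ) ∈ Γ := by
  induction h with
  | fail _ => simp [fv]
  | unit => simp [fv]
  | const => simp [fv]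
  | var hl =>
    intro y hy
    simp [fv] at hy
    subst hy
    exact ⟨_, lookupTE_mem' hl⟩
  | op hl =>
    intro y hy
    simp only [fv, List.mem_toFinset] at hy
    exact ⟨_, lookupTE_mem' (hl y hy)⟩
  | deref hl =>
    intro y hy; simp [fv] at hy; subst hy; exact ⟨_, lookupTE_mem' hl⟩
  | mkref hl =>
    intro y hy; simp [fv] at hy; subst hy; exact ⟨_, lookupTE_mem' hl⟩
  | assign hl1 hl2 =>
    intro y hy
    simp [fv] at hy
    rcases hy with hy | hy <;> subst hy
    · exact ⟨_, lookupTE_mem' hl1⟩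
    · exact ⟨_, lookupTE_mem' hl2⟩
  | lete h1 h2 ih1 ih2 =>
    intro y hy
    simp only [fv, Finset.mem_union, Finset.mem_sdiff, Finset.mem_singleton] at hy
    rcases hy with hy | ⟨hy, hne⟩
    · exact ih1 y hy
    · obtain ⟨σ, hσ⟩ := ih2 y hy
      rcases List.mem_append.1 hσ with h' | h'
      · exact typed_post_mem h1 y σ h'
      · simp at h'; exact absurd h'.1 hne
  | ite hl h1 h2 ih1 ih2 =>
    intro y hy
    simp only [fv, Finset.mem_insert, Finset.mem_union] at hy
    rcases hy with hy | hy | hy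
    · subst hy; exact ⟨_, lookupTE_mem' hl⟩
    · exact ih1 y hy
    · exact ih2 y hy
  | @lam Γ₀ Γ₀' Δ x ν₁ ν₂ e hsplit hbody ih =>
    intro y hy
    simp only [fv, Finset.mem_sdiff, Finset.mem_singleton] at hy
    obtain ⟨σ, hσ⟩ := ih y hy.1
    rcases List.mem_append.1 hσ with h' | h'
    · have : (y, σ) ∈ (splitTE Γ₀ (fv (Expr.lam x ν₁ e))).1 := by
        rw [hsplit]; exact h'
      exact ⟨σ, mem_splitTE1 this⟩
    · simp at h'; exact absurd h'.1 hy.2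
  | @rfun Γ₀ Γ₀' Δ f x ν₁ ν₂ e hsplit hbody ih =>
    intro y hy
    simp only [fv, Finset.mem_sdiff, Finset.mem_insert, Finset.mem_singleton,
      not_or] at hy
    obtain ⟨σ, hσ⟩ := ih y hy.1
    rcases List.mem_append.1 hσ with h' | h'
    · have : (y, σ) ∈ (splitTE Γ₀ (fv (Expr.fix f x ν₁ Δ ν₂ e))).1 := by
        rw [hsplit]; exact h'
      exact ⟨σ, mem_splitTE1 this⟩
    · simp at h'
      rcases h' with ⟨h', _⟩ | ⟨h', _⟩
      · exact absurd h' hy.2.1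
      · exact absurd h' hy.2.2
  | app hl1 hl2 =>
    intro y hy
    simp [fv] at hy
    rcases hy with hy | hy <;> subst hy
    · exact ⟨_, lookupTE_mem' hl1⟩
    · exact ⟨_, lookupTE_mem' hl2⟩
  | rapp hl1 hl2 _ =>
    intro y hy
    simp [fv] at hy
    rcases hy with hy | hy <;> subst hy
    · exact ⟨_, lookupTE_mem' hl1⟩
    · exact ⟨_, lookupTE_mem' hl2⟩

/-- A set of locations `C` is "good" for heap `H`: all in the domain of `H`,
and closed under locations of stored values. -/
def GoodC (H : Heap B) (C : Set ℕ) : Prop :=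
  (∀ ℓ ∈ C, H ℓ ≠ none) ∧
  (∀ ℓ ∈ C, ∀ w, H ℓ = some w → ∀ ℓ', HasLoc w ℓ' → ℓ' ∈ C)

lemma lookupTE_nil (y : ℕ) : lookupTE ([] : TEnv) y = none := rfl

theorem envtyped_good {R : REnv B} {H : Heap B} {Γ : TEnv} (h : EnvTyped R H Γ) :
    ∃ C : Set ℕ, GoodC H C ∧ ∀ y, (lookupTE Γ y).isSome →
      ∃ τ v, R y = some (τ, v) ∧ ∀ ℓ, HasLoc v ℓ → ℓ ∈ C := by
  refine EnvTyped.rec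
    (motive_1 := fun v H τ _ =>
      ∃ C : Set ℕ, GoodC H C ∧ ∀ ℓ, HasLoc v ℓ → ℓ ∈ C)
    (motive_2 := fun R H Γ _ =>
      ∃ C : Set ℕ, GoodC H C ∧ ∀ y, (lookupTE Γ y).isSome →
        ∃ τ v, R y = some (τ, v) ∧ ∀ ℓ, HasLoc v ℓ → ℓ ∈ C)
    ?_ ?_ ?_ ?_ ?_ ?_ ?_ ?_ h
  -- unit
  · exact ⟨∅, ⟨by simp, by simp⟩, fun ℓ hl => by cases hl⟩
  -- const
  · exact fun {c} => ⟨∅, ⟨by simp, by simp⟩, fun ℓ hl => by cases hl⟩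
  -- loc
  · intro v H ρ ℓ hv hnone ih
    obtain ⟨C, ⟨hc1, hc2⟩, hlocs⟩ := ih
    refine ⟨C ∪ {ℓ}, ⟨?_, ?_⟩, ?_⟩
    · intro ℓ' h'
      rcases h' with h' | h'
      · have := hc1 ℓ' h'
        simp only [updH]
        split <;> simp_all
      · simp only [Set.mem_singleton_iff] at h'
        subst h'
        simp [updH]
    · intro ℓ' h' w hw ℓ'' hl
      by_cases hee : ℓ' = ℓ
      · subst hee
        simp only [updH, if_pos rfl] at hw
        cases hw
        exact Or.inl (hlocs ℓ'' hl)
      · have h'' : ℓ' ∈ C := by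
          rcases h' with h' | h'
          · exact h'
          · simp only [Set.mem_singleton_iff] at h'; exact absurd h' hee
        simp only [updH, if_neg hee] at hw
        exact Or.inl (hc2 ℓ' h'' w hw ℓ'' hl)
    · intro ℓ'' hl
      cases hl
      exact Or.inr rfl
  -- clos
  · intro R H Γ x ν₁ ν₂ e m henv hbody hsize ih
    obtain ⟨C, hg, hR⟩ := ih
    refine ⟨C, hg, ?_⟩
    intro ℓ hl
    cases hl with
    | @clos _ _ _ _ y τ w _ hyfv hRy hv =>
      simp only [fv, Finset.mem_sdiff, Finset.mem_singleton] at hyfv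
      obtain ⟨σ, hσ⟩ := fv_lookup hbody y hyfv.1
      rcases List.mem_append.1 hσ with h' | h'
      · have hs : (lookupTE Γ y).isSome := lookupTE_isSome_iff.2 ⟨σ, h'⟩
        obtain ⟨τ', v', hRy', hlocs⟩ := hR y hs
        rw [hRy] at hRy'
        cases hRy'
        exact hlocs ℓ hv
      · simp at h'
        exact absurd h'.1 hyfv.2
  -- closR
  · intro R H Δ f x ν₁ ν₂ e m henv hbody hsize ih
    obtain ⟨C, hg, hR⟩ := ih
    refine ⟨C, hg, ?_⟩
    intro ℓ hl
    cases hl with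
    | @closR _ _ _ _ _ _ _ y τ w _ hyfv hRy hv =>
      simp only [fv, Finset.mem_sdiff, Finset.mem_insert, Finset.mem_singleton,
        not_or] at hyfv
      obtain ⟨σ, hσ⟩ := fv_lookup hbody y hyfv.1
      rcases List.mem_append.1 hσ with h' | h'
      · have hs : (lookupTE (nenvToT Δ) y).isSome := lookupTE_isSome_iff.2 ⟨σ, h'⟩
        obtain ⟨τ', v', hRy', hlocs⟩ := hR y hs
        rw [hRy] at hRy'
        cases hRy'
        exact hlocs ℓ hv
      · simp at h'
        rcases h' with ⟨h', _⟩ | ⟨h', _⟩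
        · exact absurd h' hyfv.2.1
        · exact absurd h' hyfv.2.2
  -- nil
  · intro R H
    exact ⟨∅, ⟨by simp, by simp⟩, fun y hy => by simp [lookupTE_nil] at hy⟩
  -- cons
  · intro R H₁ H₂ Γ x τ v henv hval hdisj ih1 ih2
    obtain ⟨C₁, ⟨hc1, hc2⟩, hR1⟩ := ih1
    obtain ⟨C₂, ⟨hd1, hd2⟩, hlocs⟩ := ih2
    refine ⟨C₁ ∪ C₂, ⟨?_, ?_⟩, ?_⟩
    · intro ℓ h'
      rcases h' with h' | h'
      · cases h1 : H₁ ℓ with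
        | none => exact absurd h1 (hc1 ℓ h')
        | some w => rw [HUn_some h1]; simp
      · cases h1 : H₁ ℓ with
        | none => rw [HUn_none h1]; exact hd1 ℓ h'
        | some w => rw [HUn_some h1]; simp
    · intro ℓ h' w hw ℓ' hl
      rcases h' with h' | h'
      · cases h1 : H₁ ℓ with
        | none => exact absurd h1 (hc1 ℓ h')
        | some w₁ =>
          rw [HUn_some h1] at hw
          cases hw
          exact Or.inl (hc2 ℓ h' w h1 ℓ' hl)
      · have h2 : H₂ ℓ ≠ none := hd1 ℓ h'
        have h1 : H₁ ℓ = none := by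
          rcases hdisj ℓ with h | h
          · exact h
          · exact absurd h h2
        rw [HUn_none h1] at hw
        exact Or.inr (hd2 ℓ h' w hw ℓ' hl)
    · intro y hy
      rw [lookupTE_append_single] at hy
      by_cases hxy : x = y
      · subst hxy
        refine ⟨τ, v, by simp [updR], fun ℓ hl => Or.inr (hlocs ℓ hl)⟩
      · rw [if_neg hxy] at hy
        obtain ⟨τ', v', hRy, hl⟩ := hR1 y hy
        have hyx : ¬ y = x := fun h => hxy h.symm
        exact ⟨τ', v', by simp [updR, hyx, hRy], fun ℓ h => Or.inl (hl ℓ h)⟩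
  -- consR
  · intro R R₁ H Δ f x ν₁ ν₂ e henv hbody hagree ih
    obtain ⟨C, hg, hR⟩ := ih
    refine ⟨C, hg, ?_⟩
    intro y hy
    rw [lookupTE_append_single] at hy
    by_cases hfy : f = y
    · subst hfy
      refine ⟨.rfn ν₁ Δ ν₂, .closR f x ν₁ Δ ν₂ e R₁, by simp [updR], ?_⟩
      intro ℓ hl
      cases hl with
      | @closR _ _ _ _ _ _ _ z τ w _ hzfv hRz hv =>
        simp only [fv, Finset.mem_sdiff, Finset.mem_insert, Finset.mem_singleton,
          not_or] at hzfv
        obtain ⟨σ, hσ⟩ := fv_lookup hbody z hzfv.1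
        rcases List.mem_append.1 hσ with h' | h'
        · have hs : (lookupTE (nenvToT Δ) z).isSome := lookupTE_isSome_iff.2 ⟨σ, h'⟩
          obtain ⟨τ', v', hRz', hlocs⟩ := hR z hs
          rw [hagree z hs, hRz'] at hRz
          cases hRz
          exact hlocs ℓ hv
        · simp at h'
          rcases h' with ⟨h', _⟩ | ⟨h', _⟩
          · exact absurd h' hzfv.2.1
          · exact absurd h' hzfv.2.2
    · rw [if_neg hfy] at hy
      obtain ⟨τ', v', hRy, hl⟩ := hR y hy
      have hyf : ¬ y = f := fun h => hfy h.symm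
      exact ⟨τ', v', by simp [updR, hyf, hRy], hl⟩

lemma eval_subenv {tru : B → Bool} {M : Expr B} {R : REnv B} {H : Heap B} {a : Ans B}
    (he : Eval tru M R H a) :
    ∀ v R' H', a = .res v R' H' → ∀ y, R' y = R y ∨ R' y = none := by
  induction he with
  | fail => intro v R' H' h; simp at h
  | unit => rintro v R' H' h y; rw [Ans.res.injEq] at h; obtain ⟨rfl, rfl, rfl⟩ := h; exact Or.inl rfl
  | const => rintro v R' H' h y; rw [Ans.res.injEq] at h; obtain ⟨rfl, rfl, rfl⟩ := h; exact Or.inl rfl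
  | @var R₀ H₀ x τ₀ w hRx =>
    rintro v R' H' h y; rw [Ans.res.injEq] at h; obtain ⟨rfl, rfl, rfl⟩ := h
    unfold dropRV remR
    split
    · exact Or.inl rfl
    · by_cases hy : y = x <;> simp [hy]
  | op _ => rintro v R' H' h y; rw [Ans.res.injEq] at h; obtain ⟨rfl, rfl, rfl⟩ := h; exact Or.inl rfl
  | @deref R₀ H₀ x τ₀ ρ ℓ w hRx hHl =>
    rintro v R' H' h y; rw [Ans.res.injEq] at h; obtain ⟨rfl, rfl, rfl⟩ := h
    unfold dropRV remR
    split
    · exact Or.inl rfl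
    · by_cases hy : y = x <;> simp [hy]
  | @mkref R₀ H₀ x τ₀ ρ w ℓ hRx hHl =>
    rintro v R' H' h y; rw [Ans.res.injEq] at h; obtain ⟨rfl, rfl, rfl⟩ := h
    unfold dropRV remR
    split
    · exact Or.inl rfl
    · by_cases hy : y = x <;> simp [hy]
  | @assign R₀ H₀ y₀ x τy τx ρ ℓ w hRy hRx =>
    rintro v R' H' h y; rw [Ans.res.injEq] at h; obtain ⟨rfl, rfl, rfl⟩ := h
    unfold dropRV remR
    split
    · exact Or.inl rfl
    · by_cases hy : y = x <;> simp [hy]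
  | leteF _ _ => intro v R' H' h; simp at h
  | @lete R H x τ e₁ e₂ v₁ R₁ H₁ a h1 h2 ih1 ih2 =>
    intro v R' H' h y
    cases a with
    | fail => simp [Ans.removeVar] at h
    | res v₂ R₂ H₂' =>
      simp only [Ans.removeVar, Ans.res.injEq] at h
      obtain ⟨rfl, rfl, rfl⟩ := h
      by_cases hy : y = x
      · simp [remR, hy]
      · have h2' := ih2 v₂ R₂ H₂' rfl y
        rw [show (updR R₁ x τ v₁) y = R₁ y by simp [updR, hy]] at h2'
        rcases h2' with h2' | h2'
        · rcases ih1 v₁ R₁ H₁ rfl y with h1' | h1'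
          · exact Or.inl (by simp [remR, hy, h2', h1'])
          · exact Or.inr (by simp [remR, hy, h2', h1'])
        · exact Or.inr (by simp [remR, hy, h2'])
  | iteT _ _ _ ih => exact ih
  | iteF _ _ _ ih => exact ih
  | @lam R₀ H₀ x ν e =>
    rintro v R' H' h y; rw [Ans.res.injEq] at h; obtain ⟨rfl, rfl, rfl⟩ := h
    simp only [splitREnv]
    cases hr : R₀ y with
    | none => simp [hr]
    | some p => obtain ⟨τ, w⟩ := p; simp only [hr]; split <;> simp [hr]
  | @fixE R₀ H₀ f x ν₁ Δ ν₂ e =>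
    rintro v R' H' h y; rw [Ans.res.injEq] at h; obtain ⟨rfl, rfl, rfl⟩ := h
    simp only [splitREnv]
    cases hr : R₀ y with
    | none => simp [hr]
    | some p => obtain ⟨τ, w⟩ := p; simp only [hr]; split <;> simp [hr]
  | app1 _ _ _ _ =>
    rename_i a _ _ _ _
    intro v R' H' h y
    cases a with
    | fail => simp [Ans.withEnv] at h
    | res v₂ R₂ H₂' =>
      simp only [Ans.withEnv, Ans.res.injEq] at h
      obtain ⟨rfl, rfl, rfl⟩ := h
      exact Or.inl rfl
  | app2 _ _ _ _ =>
    rename_i a _ _ _ _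
    intro v R' H' h y
    cases a with
    | fail => simp [Ans.withEnv] at h
    | res v₂ R₂ H₂' =>
      simp only [Ans.withEnv, Ans.res.injEq] at h
      obtain ⟨rfl, rfl, rfl⟩ := h
      exact Or.inl rfl

theorem eval_strengthen {tru : B → Bool} {M : Expr B} {R : REnv B} {H : Heap B}
    {a : Ans B} (he : Eval tru M R H a) :
    ∀ v R' H' (U C : Set ℕ) (H₁ H₂ : Heap B), a = .res v R' H' →
      (∀ y ∈ fv M, y ∈ U) →
      (∀ y ∈ U, ∀ τ w, R y = some (τ, w) → ∀ ℓ, HasLoc w ℓ → ℓ ∈ C) →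
      GoodC H₁ C → HDisj H₁ H₂ → H = HUn H₁ H₂ →
      ∃ H₁' C', Eval tru M R H₁ (.res v R' H₁') ∧ HDisj H₁' H₂ ∧
        H' = HUn H₁' H₂ ∧ C ⊆ C' ∧ GoodC H₁' C' ∧ ∀ ℓ, HasLoc v ℓ → ℓ ∈ C' := by
  induction he with
  | fail => intro v R' H' U C H₁ H₂ hEq; simp at hEq
  | unit =>
    intro v R' H' U C H₁ H₂ hEq hfv hRC hGood hd hHeq
    rw [Ans.res.injEq] at hEq
    obtain ⟨rfl, rfl, rfl⟩ := hEq
    exact ⟨H₁, C, Eval.unit, hd, hHeq, fun _ h => h, hGood, fun ℓ hl => by cases hl⟩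
  | const =>
    intro v R' H' U C H₁ H₂ hEq hfv hRC hGood hd hHeq
    rw [Ans.res.injEq] at hEq
    obtain ⟨rfl, rfl, rfl⟩ := hEq
    exact ⟨H₁, C, Eval.const, hd, hHeq, fun _ h => h, hGood, fun ℓ hl => by cases hl⟩
  | @var R₀ H₀ x τ₀ w hRx =>
    intro v R' H' U C H₁ H₂ hEq hfv hRC hGood hd hHeq
    rw [Ans.res.injEq] at hEq
    obtain ⟨rfl, rfl, rfl⟩ := hEq
    refine ⟨H₁, C, Eval.var hRx, hd, hHeq, fun _ h => h, hGood, ?_⟩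
    exact fun ℓ hl => hRC x (hfv x (by simp [fv])) τ₀ w hRx ℓ hl
  | op hbs =>
    intro v R' H' U C H₁ H₂ hEq hfv hRC hGood hd hHeq
    rw [Ans.res.injEq] at hEq
    obtain ⟨rfl, rfl, rfl⟩ := hEq
    exact ⟨H₁, C, Eval.op hbs, hd, hHeq, fun _ h => h, hGood, fun ℓ hl => by cases hl⟩
  | @deref R₀ H₀ x τ₀ ρ ℓ w hRx hHl =>
    intro v R' H' U C H₁ H₂ hEq hfv hRC hGood hd hHeq
    rw [Ans.res.injEq] at hEq
    obtain ⟨rfl, rfl, rfl⟩ := hEq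
    subst hHeq
    have hxU : x ∈ U := hfv x (by simp [fv])
    have hlC : ℓ ∈ C := hRC x hxU τ₀ (.loc ℓ) hRx ℓ HasLoc.loc
    obtain ⟨w', hw'⟩ := Option.ne_none_iff_exists'.1 (hGood.1 ℓ hlC)
    have hww : w' = w := by
      have := HUn_some (H₂ := H₂) hw'
      rw [this] at hHl
      exact Option.some.inj hHl
    subst hww
    refine ⟨H₁, C, Eval.deref hRx hw', hd, rfl, fun _ h => h, hGood, ?_⟩
    exact fun ℓ' hl => hGood.2 ℓ hlC w' hw' ℓ' hl
  | @mkref R₀ H₀ x τ₀ ρ w ℓ hRx hHl =>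
    intro v R' H' U C H₁ H₂ hEq hfv hRC hGood hd hHeq
    rw [Ans.res.injEq] at hEq
    obtain ⟨rfl, rfl, rfl⟩ := hEq
    subst hHeq
    obtain ⟨h1n, h2n⟩ := HUn_eq_none hHl
    have hxU : x ∈ U := hfv x (by simp [fv])
    have hwC : ∀ ℓ', HasLoc w ℓ' → ℓ' ∈ C := fun ℓ' hl => hRC x hxU τ₀ w hRx ℓ' hl
    have hlnC : ℓ ∉ C := fun h => hGood.1 ℓ h h1n
    refine ⟨updH H₁ ℓ w, C ∪ {ℓ}, Eval.mkref hRx h1n, ?_, updH_HUn .., ?_, ⟨?_, ?_⟩, ?_⟩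
    · intro ℓ'
      by_cases h : ℓ' = ℓ
      · subst h; exact Or.inr h2n
      · simpa [updH, h] using hd ℓ'
    · exact fun _ h => Or.inl h
    · intro ℓ' h'
      by_cases h : ℓ' = ℓ
      · simp [updH, h]
      · rcases h' with h' | h'
        · simpa [updH, h] using hGood.1 ℓ' h'
        · simp only [Set.mem_singleton_iff] at h'; exact absurd h' h
    · intro ℓ' h' w' hw' ℓ'' hl
      by_cases h : ℓ' = ℓ
      · subst h
        simp only [updH, if_pos rfl] at hw'
        cases hw'
        exact Or.inl (hwC ℓ'' hl)
      · have h'' : ℓ' ∈ C := by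
          rcases h' with h' | h'
          · exact h'
          · simp only [Set.mem_singleton_iff] at h'; exact absurd h' h
        simp only [updH, if_neg h] at hw'
        exact Or.inl (hGood.2 ℓ' h'' w' hw' ℓ'' hl)
    · intro ℓ'' hl
      cases hl
      exact Or.inr rfl
  | @assign R₀ H₀ y₀ x τy τx ρ ℓ w hRy hRx =>
    intro v R' H' U C H₁ H₂ hEq hfv hRC hGood hd hHeq
    rw [Ans.res.injEq] at hEq
    obtain ⟨rfl, rfl, rfl⟩ := hEq
    subst hHeq
    have hyU : y₀ ∈ U := hfv y₀ (by simp [fv])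
    have hxU : x ∈ U := hfv x (by simp [fv])
    have hlC : ℓ ∈ C := hRC y₀ hyU τy (.loc ℓ) hRy ℓ HasLoc.loc
    have h2n : H₂ ℓ = none := by
      rcases hd ℓ with h | h
      · exact absurd h (hGood.1 ℓ hlC)
      · exact h
    have hwC : ∀ ℓ', HasLoc w ℓ' → ℓ' ∈ C := fun ℓ' hl => hRC x hxU τx w hRx ℓ' hl
    refine ⟨updH H₁ ℓ w, C, Eval.assign hRy hRx, ?_, updH_HUn .., fun _ h => h, ⟨?_, ?_⟩, ?_⟩
    · intro ℓ'
      by_cases h : ℓ' = ℓ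
      · subst h; exact Or.inr h2n
      · simpa [updH, h] using hd ℓ'
    · intro ℓ' h'
      by_cases h : ℓ' = ℓ
      · simp [updH, h]
      · simpa [updH, h] using hGood.1 ℓ' h'
    · intro ℓ' h' w' hw' ℓ'' hl
      by_cases h : ℓ' = ℓ
      · subst h
        simp only [updH, if_pos rfl] at hw'
        cases hw'
        exact hwC ℓ'' hl
      · simp only [updH, if_neg h] at hw'
        exact hGood.2 ℓ' h' w' hw' ℓ'' hl
    · intro ℓ'' hl
      cases hl
  | leteF _ _ => intro v R' H' U C H₁ H₂ hEq; simp at hEq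
  | @lete R₀ H₀ x τ₀ e₁ e₂ v₁ R₁ Hm a h1 h2 ih1 ih2 =>
    intro v R' H' U C H₁ H₂ hEq hfv hRC hGood hd hHeq
    cases a with
    | fail => simp [Ans.removeVar] at hEq
    | res v₂ R₂ H₂' =>
      simp only [Ans.removeVar, Ans.res.injEq] at hEq
      obtain ⟨rfl, rfl, rfl⟩ := hEq
      have hfv1 : ∀ y ∈ fv e₁, y ∈ U := fun y hy => hfv y (by simp [fv, hy])
      obtain ⟨H₁a, C₁, hev1, hd1, hHm, hsub1, hGood1, hlocs1⟩ :=
        ih1 v₁ R₁ Hm U C H₁ H₂ rfl hfv1 hRC hGood hd hHeq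
      have hfv2 : ∀ y ∈ fv e₂, y ∈ U ∪ {x} := by
        intro y hy
        by_cases hyx : y = x
        · exact Or.inr hyx
        · exact Or.inl (hfv y (by simp [fv, hy, hyx]))
      have hRC2 : ∀ y ∈ U ∪ {x}, ∀ τ' w, updR R₁ x τ₀ v₁ y = some (τ', w) →
          ∀ ℓ, HasLoc w ℓ → ℓ ∈ C₁ := by
        intro y hy τ' w hRw ℓ hl
        by_cases hyx : y = x
        · rw [show updR R₁ x τ₀ v₁ y = some (τ₀, v₁) by simp [updR, hyx]] at hRw
          cases hRw
          exact hlocs1 ℓ hl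
        · rw [show updR R₁ x τ₀ v₁ y = R₁ y by simp [updR, hyx]] at hRw
          have hyU : y ∈ U := by
            rcases hy with hy | hy
            · exact hy
            · exact absurd hy hyx
          rcases eval_subenv h1 v₁ R₁ Hm rfl y with hs | hs
          · rw [hs] at hRw
            exact hsub1 (hRC y hyU τ' w hRw ℓ hl)
          · rw [hs] at hRw; cases hRw
      obtain ⟨H₁b, C₂, hev2, hd2, hH2', hsub2, hGood2, hlocs2⟩ :=
        ih2 v₂ R₂ H₂' (U ∪ {x}) C₁ H₁a H₂ rfl hfv2 hRC2 hGood1 hd1 hHm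
      refine ⟨H₁b, C₂, ?_, hd2, hH2', fun ℓ h => hsub2 (hsub1 h), hGood2, hlocs2⟩
      have := Eval.lete hev1 hev2
      simpa [Ans.removeVar] using this
  | @iteT R₀ H₀ x τ₀ b e₁ e₂ a hRx htru hev ih =>
    intro v R' H' U C H₁ H₂ hEq hfv hRC hGood hd hHeq
    have hfv1 : ∀ y ∈ fv e₁, y ∈ U := fun y hy => hfv y (by simp [fv]; tauto)
    obtain ⟨H₁', C', hev', hd', hH', hsub, hGood', hlocs⟩ :=
      ih v R' H' U C H₁ H₂ hEq hfv1 hRC hGood hd hHeq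
    exact ⟨H₁', C', Eval.iteT hRx htru hev', hd', hH', hsub, hGood', hlocs⟩
  | @iteF R₀ H₀ x τ₀ b e₁ e₂ a hRx htru hev ih =>
    intro v R' H' U C H₁ H₂ hEq hfv hRC hGood hd hHeq
    have hfv1 : ∀ y ∈ fv e₂, y ∈ U := fun y hy => hfv y (by simp [fv]; tauto)
    obtain ⟨H₁', C', hev', hd', hH', hsub, hGood', hlocs⟩ :=
      ih v R' H' U C H₁ H₂ hEq hfv1 hRC hGood hd hHeq
    exact ⟨H₁', C', Eval.iteF hRx htru hev', hd', hH', hsub, hGood', hlocs⟩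
  | @lam R₀ H₀ x ν e =>
    intro v R' H' U C H₁ H₂ hEq hfv hRC hGood hd hHeq
    rw [Ans.res.injEq] at hEq
    obtain ⟨rfl, rfl, rfl⟩ := hEq
    refine ⟨H₁, C, Eval.lam, hd, hHeq, fun _ h => h, hGood, ?_⟩
    intro ℓ hl
    cases hl with
    | @clos _ _ _ _ z τ' w _ hz hRz hw =>
      have hzS : z ∈ fv (Expr.lam x ν e) := hz
      rw [show (splitREnv R₀ (fv (Expr.lam x ν e))).1 z = R₀ z by
        simp [splitREnv, hzS]] at hRz
      exact hRC z (hfv z hzS) τ' w hRz ℓ hw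
  | @fixE R₀ H₀ f x ν₁ Δ ν₂ e =>
    intro v R' H' U C H₁ H₂ hEq hfv hRC hGood hd hHeq
    rw [Ans.res.injEq] at hEq
    obtain ⟨rfl, rfl, rfl⟩ := hEq
    refine ⟨H₁, C, Eval.fixE, hd, hHeq, fun _ h => h, hGood, ?_⟩
    intro ℓ hl
    cases hl with
    | @closR _ _ _ _ _ _ _ z τ' w _ hz hRz hw =>
      have hzS : z ∈ fv (Expr.fix f x ν₁ Δ ν₂ e) := hz
      rw [show (splitREnv R₀ (fv (Expr.fix f x ν₁ Δ ν₂ e))).1 z = R₀ z by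
        simp [splitREnv, hzS]] at hRz
      exact hRC z (hfv z hzS) τ' w hRz ℓ hw
  | @app1 R₀ H₀ f x τf τx y ν e R₁ vx a hRf hRx hev ih =>
    intro v R' H' U C H₁ H₂ hEq hfv hRC hGood hd hHeq
    cases a with
    | fail => simp [Ans.withEnv] at hEq
    | res vb Rb Hb =>
      simp only [Ans.withEnv, Ans.res.injEq] at hEq
      obtain ⟨rfl, rfl, rfl⟩ := hEq
      have hfU : f ∈ U := hfv f (by simp [fv])
      have hxU : x ∈ U := hfv x (by simp [fv])
      have hRCb : ∀ z ∈ (↑(fv e) : Set ℕ), ∀ τ' w, updR R₁ y (.ofN ν) vx z = some (τ', w) →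
          ∀ ℓ, HasLoc w ℓ → ℓ ∈ C := by
        intro z hz τ' w hRw ℓ hl
        by_cases hzy : z = y
        · rw [show updR R₁ y (.ofN ν) vx z = some (.ofN ν, vx) by simp [updR, hzy]] at hRw
          cases hRw
          exact hRC x hxU τx vx hRx ℓ hl
        · rw [show updR R₁ y (.ofN ν) vx z = R₁ z by simp [updR, hzy]] at hRw
          have hzfv : z ∈ fv (Expr.lam y ν e) := by
            simp only [fv, Finset.mem_sdiff, Finset.mem_singleton]
            exact ⟨Finset.mem_coe.1 hz, hzy⟩
          exact hRC f hfU τf (.clos y ν e R₁) hRf ℓ (HasLoc.clos hzfv hRw hl)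
      obtain ⟨H₁b, C', hevb, hdb, hHb, hsub, hGoodb, hlocsb⟩ :=
        ih vb Rb Hb (↑(fv e)) C H₁ H₂ rfl (fun z hz => Finset.mem_coe.2 hz)
          hRCb hGood hd hHeq
      refine ⟨H₁b, C', ?_, hdb, hHb, hsub, hGoodb, hlocsb⟩
      have := Eval.app1 hRf hRx hevb
      simpa [Ans.withEnv] using this
  | @app2 R₀ H₀ f x τf τx g y ν₁ Δ ν₂ e R₁ vx a hRf hRx hev ih =>
    intro v R' H' U C H₁ H₂ hEq hfv hRC hGood hd hHeq
    cases a with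
    | fail => simp [Ans.withEnv] at hEq
    | res vb Rb Hb =>
      simp only [Ans.withEnv, Ans.res.injEq] at hEq
      obtain ⟨rfl, rfl, rfl⟩ := hEq
      have hfU : f ∈ U := hfv f (by simp [fv])
      have hxU : x ∈ U := hfv x (by simp [fv])
      have hRCb : ∀ z ∈ (↑(fv e) : Set ℕ), ∀ τ' w,
          updR (updR R₁ g (.rfn ν₁ Δ ν₂) (.closR g y ν₁ Δ ν₂ e R₁)) y (.ofN ν₁) vx z
            = some (τ', w) → ∀ ℓ, HasLoc w ℓ → ℓ ∈ C := by
        intro z hz τ' w hRw ℓ hl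
        by_cases hzy : z = y
        · rw [show updR (updR R₁ g (.rfn ν₁ Δ ν₂) (.closR g y ν₁ Δ ν₂ e R₁)) y
              (.ofN ν₁) vx z = some (.ofN ν₁, vx) by simp [updR, hzy]] at hRw
          cases hRw
          exact hRC x hxU τx vx hRx ℓ hl
        · by_cases hzg : z = g
          · rw [show updR (updR R₁ g (.rfn ν₁ Δ ν₂) (.closR g y ν₁ Δ ν₂ e R₁)) y
                (.ofN ν₁) vx z = some (.rfn ν₁ Δ ν₂, .closR g y ν₁ Δ ν₂ e R₁) by
                subst hzg; simp [updR, hzy]] at hRw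
            cases hRw
            exact hRC f hfU τf (.closR g y ν₁ Δ ν₂ e R₁) hRf ℓ hl
          · rw [show updR (updR R₁ g (.rfn ν₁ Δ ν₂) (.closR g y ν₁ Δ ν₂ e R₁)) y
                (.ofN ν₁) vx z = R₁ z by simp [updR, hzy, hzg]] at hRw
            have hzfv : z ∈ fv (Expr.fix g y ν₁ Δ ν₂ e) := by
              simp only [fv, Finset.mem_sdiff, Finset.mem_insert,
                Finset.mem_singleton, not_or]
              exact ⟨Finset.mem_coe.1 hz, hzg, hzy⟩
            exact hRC f hfU τf (.closR g y ν₁ Δ ν₂ e R₁) hRf ℓ (HasLoc.closR hzfv hRw hl)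
      obtain ⟨H₁b, C', hevb, hdb, hHb, hsub, hGoodb, hlocsb⟩ :=
        ih vb Rb Hb (↑(fv e)) C H₁ H₂ rfl (fun z hz => Finset.mem_coe.2 hz)
          hRCb hGood hd hHeq
      refine ⟨H₁b, C', ?_, hdb, hHb, hsub, hGoodb, hlocsb⟩
      have := Eval.app2 hRf hRx hevb
      simpa [Ans.withEnv] using this

end AuxHeapStrengthening

/-- Heap strengthening for bPCFRL evaluation: evaluation depends only on, and
modifies only, the portion of the heap owned by the typing environment. -/
theorem heap_strengthening {B : Type} (tru : B → Bool) {Γ Γ' : TEnv} {M : Expr B}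
    {τ : FTy} {R R' : REnv B} {H₁ H₂ H' : Heap B} {v : Val B}
    (ht : EnvTyped R H₁ Γ) (hty : Typed Γ M τ Γ') (hd : HDisj H₁ H₂)
    (he : Eval tru M R (HUn H₁ H₂) (.res v R' H')) :
    ∃ H₁' : Heap B, Eval tru M R H₁ (.res v R' H₁') ∧ HDisj H₁' H₂ ∧ H' = HUn H₁' H₂ := by
  obtain ⟨C, hGood, hR⟩ := envtyped_good ht
  have hfv : ∀ y ∈ fv M, y ∈ {z : ℕ | (lookupTE Γ z).isSome} := by
    intro y hy
    obtain ⟨σ, hσ⟩ := fv_lookup hty y hy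
    exact lookupTE_isSome_iff.2 ⟨σ, hσ⟩
  have hRC : ∀ y ∈ {z : ℕ | (lookupTE Γ z).isSome}, ∀ τ' w, R y = some (τ', w) →
      ∀ ℓ, HasLoc w ℓ → ℓ ∈ C := by
    intro y hy τ' w hw ℓ hl
    obtain ⟨τ'', v'', hv, hlocs⟩ := hR y hy
    rw [hw] at hv
    cases hv
    exact hlocs ℓ hl
  obtain ⟨H₁', C', hev, hd', hH', -, -, -⟩ :=
    eval_strengthen he v R' H' {z : ℕ | (lookupTE Γ z).isSome} C H₁ H₂ rfl hfv hRC
      hGood hd rfl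
  exact ⟨H₁', hev, hd', hH'⟩
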